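/- If i is a call position of a word σ with matching return j, then the caller of every position k with i < k < j along the caller-path structure eventually reaches i; more precisely, for every position k with i < k < j, position i occurs in the caller path of σ from k. -/
import Mathlib


inductive SymKind where
  | call | ret | intl
deriving DecidableEq

/-- Well-matched words over a pushdown alphabet, where `k` assigns to each
letter its kind (call, return, or internal). -/
inductive WellMatched {A : Type*} (k : A → SymKind) : List A → Prop
  | nil : WellMatched k []
  | int {a : A} {s : List A} : k a = SymKind.intl → WellMatched k s →
      WellMatched k (a :: s)
  | matched {c r : A} {s s' : List A} : k c = SymKind.call → k r = SymKind.ret →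
      WellMatched k s → WellMatched k s' →
      WellMatched k (c :: (s ++ r :: s'))

/-- Number of call symbols in a finite word. -/
def callCount {A : Type*} (k : A → SymKind) (s : List A) : ℕ :=
  s.countP (fun a => decide (k a = SymKind.call))

/-- Number of return symbols in a finite word. -/
def retCount {A : Type*} (k : A → SymKind) (s : List A) : ℕ :=
  s.countP (fun a => decide (k a = SymKind.ret))

/-- The finite subword `σ[i, j-1]` of the infinite word `σ` (letters at
positions `i, i+1, ..., j-1`). -/
def wordSlice {A : Type*} (σ : ℕ → A) (i j : ℕ) : List A :=
  (List.range (j - i)).map fun n => σ (i + n)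

/-- `j` is a matching return of position `i`: `j > i`, `j` is a return
position, and the subword `σ[i+1, j-1]` is well-matched. -/
def MatchRet {A : Type*} (k : A → SymKind) (σ : ℕ → A) (i j : ℕ) : Prop :=
  i < j ∧ k (σ j) = SymKind.ret ∧ WellMatched k (wordSlice σ (i + 1) j)

/-- The abstract-successor relation `SUCC(abs, σ, i) = j`. -/
def AbsSucc {A : Type*} (k : A → SymKind) (σ : ℕ → A) (i j : ℕ) : Prop :=
  if k (σ i) = SymKind.call then MatchRet k σ i j
  else j = i + 1 ∧ k (σ (i + 1)) ≠ SymKind.ret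

/-- `j` is a candidate caller of `i`: a call position `j < i` whose abstract
successor is undefined or greater than `i`. -/
def CallerCand {A : Type*} (k : A → SymKind) (σ : ℕ → A) (i j : ℕ) : Prop :=
  j < i ∧ k (σ j) = SymKind.call ∧ ∀ m, AbsSucc k σ j m → i < m

/-- `j` is the caller of `i`: the greatest candidate caller. -/
def Caller {A : Type*} (k : A → SymKind) (σ : ℕ → A) (i j : ℕ) : Prop :=
  CallerCand k σ i j ∧ ∀ j', CallerCand k σ i j' → j' ≤ j

/-- `S` is a maximal abstract path (MAP): the set of positions reachable via
the abstract successor from a position `i0` with no abstract predecessor. -/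
def IsMAP {A : Type*} (k : A → SymKind) (σ : ℕ → A) (S : Set ℕ) : Prop :=
  ∃ i0, (¬ ∃ p, AbsSucc k σ p i0) ∧
    S = {j | Relation.ReflTransGen (AbsSucc k σ) i0 j}

/-- The set of positions of the (unique) maximal abstract path visiting `i`. -/
def PosA {A : Type*} (k : A → SymKind) (σ : ℕ → A) (i : ℕ) : Set ℕ :=
  {j | Relation.ReflTransGen (AbsSucc k σ) i j ∨
       Relation.ReflTransGen (AbsSucc k σ) j i}

/-- The set of positions of the caller path of `σ` from `i`. -/
def PosC {A : Type*} (k : A → SymKind) (σ : ℕ → A) (i : ℕ) : Set ℕ :=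
  {j | Relation.ReflTransGen (fun a b => Caller k σ a b) i j}


section Aux

variable {A : Type*} {k : A → SymKind}

lemma wm_counts {s : List A} (h : WellMatched k s) :
    retCount k s = callCount k s := by
  induction h with
  | nil => rfl
  | int ha _ ih =>
    simp only [retCount, callCount, List.countP_cons, ha] at *
    simp [ih]
  | matched hc hr _ _ ih1 ih2 =>
    simp only [retCount, callCount, List.countP_cons, List.countP_append, hc, hr] at *
    simp [ih1, ih2]
    omega

lemma prefix_append_cases {t l₁ l₂ : List A} (h : t <+: l₁ ++ l₂) :
    t <+: l₁ ∨ ∃ u, u <+: l₂ ∧ t = l₁ ++ u := by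
  obtain ⟨v, hv⟩ := h
  rcases List.append_eq_append_iff.mp hv with ⟨a', ha1, _⟩ | ⟨c', hc1, hc2⟩
  · exact Or.inl ⟨a', ha1.symm⟩
  · refine Or.inr ⟨c', ⟨v, ?_⟩, hc1⟩
    rw [hc1, List.append_assoc] at hv
    exact (List.append_cancel_left hv)

lemma wm_prefix_ret_le_call {s : List A} (h : WellMatched k s) :
    ∀ t, t <+: s → retCount k t ≤ callCount k t := by
  induction h with
  | nil =>
    intro t ht
    simp [List.prefix_nil.mp ht, retCount, callCount]
  | @int a s ha _ ih =>
    intro t ht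
    match t with
    | [] => simp [retCount, callCount]
    | b :: t' =>
      obtain ⟨hb, ht'⟩ := List.cons_prefix_cons.mp ht
      subst hb
      have := ih t' ht'
      simp [retCount, callCount, List.countP_cons, ha] at *
      omega
  | @matched c r s s' hc hr _ _ ih1 ih2 =>
    intro t ht
    match t with
    | [] => simp [retCount, callCount]
    | b :: t' =>
      obtain ⟨hb, ht'⟩ := List.cons_prefix_cons.mp ht
      subst hb
      rcases prefix_append_cases ht' with h1 | ⟨u, hu, rfl⟩
      · have := ih1 t' h1
        simp [retCount, callCount, List.countP_cons, hc] at *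
        omega
      · match u with
        | [] =>
          have := ih1 s (List.prefix_refl s)
          simp [retCount, callCount, List.countP_cons, List.countP_append, hc] at *
          omega
        | d :: u' =>
          obtain ⟨hd, hu'⟩ := List.cons_prefix_cons.mp hu
          subst hd
          have h2 := ih2 u' hu'
          have h3 := ih1 s (List.prefix_refl s)
          simp [retCount, callCount, List.countP_cons, List.countP_append, hc, hr] at *
          omega

lemma wordSlice_snoc {σ : ℕ → A} {a b : ℕ} (h : a ≤ b) :
    wordSlice σ a (b + 1) = wordSlice σ a b ++ [σ b] := by
  have : b + 1 - a = (b - a) + 1 := by omega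
  simp only [wordSlice, this, List.range_succ, List.map_append, List.map_cons, List.map_nil]
  rw [show a + (b - a) = b from by omega]

lemma wordSlice_prefix {σ : ℕ → A} {a b c : ℕ} (h : b ≤ c) :
    wordSlice σ a b <+: wordSlice σ a c := by
  have hr : List.range (b - a) <+: List.range (c - a) := by
    have : c - a = (b - a) + ((c - a) - (b - a)) := by omega
    rw [this, List.range_add]
    exact ⟨_, rfl⟩
  exact hr.map _

lemma matchRet_not_lt {σ : ℕ → A} {i m j : ℕ} (hm : MatchRet k σ i j)
    (hm' : MatchRet k σ i m) (hlt : m < j) : False := by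
  obtain ⟨him, hrm, hwm'⟩ := hm'
  obtain ⟨_, _, hw⟩ := hm
  have hpre : wordSlice σ (i + 1) (m + 1) <+: wordSlice σ (i + 1) j :=
    wordSlice_prefix (by omega)
  have hsplit : wordSlice σ (i + 1) (m + 1) = wordSlice σ (i + 1) m ++ [σ m] :=
    wordSlice_snoc (by omega)
  have hle := wm_prefix_ret_le_call hw _ hpre
  rw [hsplit] at hle
  have hcnt := wm_counts hwm'
  have hnc : k (σ m) ≠ SymKind.call := by rw [hrm]; simp
  simp only [retCount, callCount, List.countP_append, List.countP_cons,
    List.countP_nil, hrm, hnc] at hle hcnt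
  simp at hle
  omega

end Aux

/-- if `i` is a call position with matching return `j`, then for
every position `p` with `i < p < j`, position `i` occurs in the caller path of
`σ` from `p`. -/
theorem caller_path_reaches_call {A : Type*} (k : A → SymKind) (σ : ℕ → A)
    {i j p : ℕ} (hc : k (σ i) = SymKind.call) (hm : MatchRet k σ i j)
    (h1 : i < p) (h2 : p < j) :
    Relation.ReflTransGen (fun a b => Caller k σ a b) p i := by
  classical
  revert h1 h2
  induction p using Nat.strong_induction_on with
  | _ p IH =>
    intro h1 h2
    have hci : CallerCand k σ p i := by
      refine ⟨h1, hc, fun m habs => ?_⟩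
      rw [AbsSucc, if_pos hc] at habs
      by_contra hle
      push_neg at hle
      exact matchRet_not_lt hm habs (lt_of_le_of_lt hle h2)
    set q := Nat.findGreatest (CallerCand k σ p) p with hqdef
    have hq : CallerCand k σ p q := Nat.findGreatest_spec (le_of_lt h1) hci
    have hiq : i ≤ q := Nat.le_findGreatest (le_of_lt h1) hci
    have hcaller : Caller k σ p q := by
      refine ⟨hq, fun j' hj' => ?_⟩
      by_contra hgt
      push_neg at hgt
      exact Nat.findGreatest_is_greatest hgt (le_of_lt hj'.1) hj'
    rcases eq_or_lt_of_le hiq with heq | hlt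
    · rw [← heq] at hcaller
      exact Relation.ReflTransGen.single hcaller
    · exact Relation.ReflTransGen.head hcaller
        (IH q hq.1 hlt (lt_trans hq.1 h2))
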